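/- Let L : (0,∞)^d → (0,∞) be a radially slowly varying function with limit function λ, and assume λ is strictly positive. Let l : (0,∞) → (0,∞) be any univariate slowly varying function, and define K(x) = L(x)/(l(‖x‖)·λ(x/‖x‖)) for x ∈ (0,∞)^d. Then K(tx)/K(te) → 1 as t → ∞ for every x ∈ (0,∞)^d; consequently L admits the factorization L(x) = K(x)·l(r_x)·λ(a_x), where K is radially slowly varying with identically-one limit function. -/

import Mathlib

open Filter Topology

/-- The Euclidean norm of a vector in `ℝ^d` (as a pi type). -/
noncomputable def euclNorm {d : ℕ} (x : Fin d → ℝ) : ℝ :=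
  Real.sqrt (∑ i, x i ^ 2)

lemma euclNorm_pos {d : ℕ} (hd : 0 < d) (x : Fin d → ℝ) (hx : ∀ i, 0 < x i) :
    0 < euclNorm x := by
  apply Real.sqrt_pos.mpr
  apply Finset.sum_pos (fun i _ => pow_pos (hx i) 2)
  exact ⟨⟨0, hd⟩, Finset.mem_univ _⟩

lemma euclNorm_smul {d : ℕ} (t : ℝ) (ht : 0 ≤ t) (x : Fin d → ℝ) :
    euclNorm (t • x) = t * euclNorm x := by
  unfold euclNorm
  have h : ∑ i, (t • x) i ^ 2 = t ^ 2 * ∑ i, x i ^ 2 := by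
    rw [Finset.mul_sum]
    exact Finset.sum_congr rfl fun i _ => by simp [mul_pow]
  rw [h, Real.sqrt_mul (sq_nonneg t), Real.sqrt_sq ht]

lemma smul_smul_norm {d : ℕ} (t : ℝ) (ht : 0 < t) (x : Fin d → ℝ) :
    (euclNorm (t • x))⁻¹ • (t • x) = (euclNorm x)⁻¹ • x := by
  rw [euclNorm_smul t ht.le, smul_smul, mul_comm t, mul_inv, mul_assoc,
    inv_mul_cancel₀ ht.ne', mul_one]

/-- Let `L : (0,∞)^d → (0,∞)` be radially slowly varying with
strictly positive limit function `λ` (`L(tx)/L(te) → λ(a_x)`, `λ(a_e) = 1`,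
with `e = (d^{-1/2},...,d^{-1/2})`, `a_x = x/‖x‖`), and let `l` be any univariate
slowly varying function. Define `K(x) = L(x)/(l(‖x‖)·λ(x/‖x‖))`. Then
`K(tx)/K(te) → 1` as `t → ∞` for every `x ∈ (0,∞)^d`, and `L` factorizes as
`L(x) = K(x)·l(r_x)·λ(a_x)`. -/
theorem stmt_6 {d : ℕ} (hd : 0 < d) (e : Fin d → ℝ)
    (he : e = fun _ => (d : ℝ) ^ (-(1 : ℝ) / 2))
    (L lam : (Fin d → ℝ) → ℝ) (l : ℝ → ℝ)
    (hLpos : ∀ x : Fin d → ℝ, (∀ i, 0 < x i) → 0 < L x)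
    (hlame : lam ((euclNorm e)⁻¹ • e) = 1)
    (hlampos : ∀ x : Fin d → ℝ, (∀ i, 0 < x i) → 0 < lam ((euclNorm x)⁻¹ • x))
    (hLlim : ∀ x : Fin d → ℝ, (∀ i, 0 < x i) →
      Tendsto (fun t : ℝ => L (t • x) / L (t • e)) atTop
        (𝓝 (lam ((euclNorm x)⁻¹ • x))))
    (hlpos : ∀ y : ℝ, 0 < y → 0 < l y)
    (hlsv : ∀ y : ℝ, 0 < y →
      Tendsto (fun t : ℝ => l (t * y) / l t) atTop (𝓝 1))
    (K : (Fin d → ℝ) → ℝ)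
    (hK : ∀ x, K x = L x / (l (euclNorm x) * lam ((euclNorm x)⁻¹ • x))) :
    (∀ x : Fin d → ℝ, (∀ i, 0 < x i) →
      Tendsto (fun t : ℝ => K (t • x) / K (t • e)) atTop (𝓝 1)) ∧
    (∀ x : Fin d → ℝ, (∀ i, 0 < x i) →
      L x = K x * l (euclNorm x) * lam ((euclNorm x)⁻¹ • x)) := by
  have hepos : ∀ i, 0 < e i := by
    intro i; rw [he]; positivity
  have hne : euclNorm e = 1 := by
    have hsq : ((d : ℝ) ^ (-(1 : ℝ) / 2)) ^ 2 = (d : ℝ)⁻¹ := by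
      rw [← Real.rpow_natCast ((d : ℝ) ^ (-(1 : ℝ) / 2)) 2,
        ← Real.rpow_mul (Nat.cast_nonneg d)]
      norm_num [Real.rpow_neg_one]
    unfold euclNorm
    rw [he]
    simp only [hsq, Finset.sum_const, Finset.card_univ, Fintype.card_fin, nsmul_eq_mul]
    rw [mul_inv_cancel₀ (by exact_mod_cast hd.ne'), Real.sqrt_one]
  constructor
  · intro x hx
    have hlame' : lam e = 1 := by rw [← hlame, hne, inv_one, one_smul]
    have hnx := euclNorm_pos hd x hx
    set a := (euclNorm x)⁻¹ • x with ha
    have hla := hlampos x hx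
    -- the auxiliary limit
    have h2 : Tendsto (fun t : ℝ => (l (t * euclNorm x) / l (t * 1))⁻¹) atTop (𝓝 1) := by
      simpa using ((hlsv (euclNorm x) hnx).inv₀ one_ne_zero)
    have h3 : Tendsto (fun t : ℝ =>
        (L (t • x) / L (t • e)) * (l (t * euclNorm x) / l (t * 1))⁻¹ * (lam a)⁻¹)
        atTop (𝓝 1) := by
      have := ((hLlim x hx).mul h2).mul (tendsto_const_nhds (x := (lam a)⁻¹))
      have hla' : lam a ≠ 0 := hla.ne'
      rw [← ha, mul_one, mul_inv_cancel₀ hla'] at this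
      simpa [mul_inv_cancel₀ hla.ne'] using this
    refine h3.congr' ?_
    filter_upwards [eventually_gt_atTop 0] with t ht
    have htx : ∀ i, 0 < (t • x) i := fun i => by
      simpa using mul_pos ht (hx i)
    have hte : ∀ i, 0 < (t • e) i := fun i => by
      simpa using mul_pos ht (hepos i)
    have hLx := hLpos _ htx
    have hLe := hLpos _ hte
    have hlx := hlpos _ (mul_pos ht hnx)
    have hle := hlpos _ (by simpa using ht : (0:ℝ) < t * 1)
    rw [hK (t • x), hK (t • e), smul_smul_norm t ht x, smul_smul_norm t ht e,
      euclNorm_smul t ht.le x, euclNorm_smul t ht.le e, hne, inv_one, one_smul, hlame', ← ha]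
    field_simp
  · intro x hx
    have hnx := euclNorm_pos hd x hx
    have hlx := hlpos _ hnx
    have hla := hlampos x hx
    rw [hK x, mul_assoc, div_mul_cancel₀]
    positivity
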